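/- Let p be an odd prime, m an integer, and for ν ≥ 1 let R_{p^ν}^{Zero}(m) = {x ∈ (ℤ/p^ν)⁴ : x₁²+x₂²+x₃²+x₄² ≡ m (mod p^ν), all xᵢ ≡ 0 (mod p)}. If p² | m and ν ≥ 3, then the map x ↦ x/p (mod p^{ν-2}) is a surjection from R_{p^ν}^{Zero}(m) onto R_{p^{ν-2}}(m/p²) in which every fiber has exactly p⁴ elements. -/

import Mathlib

/-- for `p` an odd prime, `ν ≥ 3`, `p² ∣ m`, the map `x ↦ x/p`
(realized via canonical representatives) sends Zero-type solutions of
`Σxᵢ² ≡ m (mod p^ν)` to solutions of `Σxᵢ² ≡ m/p² (mod p^{ν-2})`, and over each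
solution `y` mod `p^{ν-2}` there lie exactly `p⁴` Zero-type solutions. -/
theorem zero_type_surjection (p ν : ℕ) (hp : p.Prime) (hodd : p ≠ 2)
    (hν : 3 ≤ ν) (m : ℤ) (hm : (p : ℤ) ^ 2 ∣ m) :
    (∀ x : Fin 4 → ZMod (p ^ ν),
      ((∑ i, x i ^ 2) = (m : ZMod (p ^ ν)) ∧ ∀ i, ((p : ZMod (p ^ ν)) ∣ x i)) →
        (∑ i, (((x i).val / p : ℕ) : ZMod (p ^ (ν - 2))) ^ 2) =
          ((m / (p : ℤ) ^ 2 : ℤ) : ZMod (p ^ (ν - 2)))) ∧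
    ∀ y : Fin 4 → ZMod (p ^ (ν - 2)),
      (∑ i, y i ^ 2) = ((m / (p : ℤ) ^ 2 : ℤ) : ZMod (p ^ (ν - 2))) →
        Nat.card {x : Fin 4 → ZMod (p ^ ν) //
          ((∑ i, x i ^ 2) = (m : ZMod (p ^ ν)) ∧ ∀ i, ((p : ZMod (p ^ ν)) ∣ x i)) ∧
            ∀ i, (((x i).val / p : ℕ) : ZMod (p ^ (ν - 2))) = y i} = p ^ 4 := by
  have hppos : 0 < p := hp.pos
  haveI : NeZero p := ⟨hp.ne_zero⟩
  haveI : NeZero (p ^ ν) := ⟨pow_ne_zero _ hp.ne_zero⟩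
  haveI : NeZero (p ^ (ν - 2)) := ⟨pow_ne_zero _ hp.ne_zero⟩
  obtain ⟨m', rfl⟩ := hm
  have hm' : ((p:ℤ) ^ 2 * m') / (p:ℤ) ^ 2 = m' :=
    Int.mul_ediv_cancel_left _ (by positivity)
  have e1 : (p:ℕ) ^ (ν - 1) = p * p ^ (ν - 2) := by
    rw [← pow_succ']; congr 1; omega
  have e2 : (p:ℕ) ^ ν = p * p ^ (ν - 1) := by
    rw [← pow_succ']; congr 1; omega
  have e3 : (p:ℕ) ^ ν = p ^ 2 * p ^ (ν - 2) := by
    rw [← pow_add]; congr 1; omega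
  -- divisibility in ZMod implies divisibility of val
  have keydvd : ∀ x : ZMod (p ^ ν), (p : ZMod (p ^ ν)) ∣ x → p ∣ x.val := by
    intro x ⟨c, hc⟩
    have : x.val = ((p : ZMod (p ^ ν)) * c).val := by rw [hc]
    rw [ZMod.val_mul, ZMod.val_cast_of_lt
      (by calc p = p ^ 1 := (pow_one p).symm
        _ < p ^ ν := Nat.pow_lt_pow_right hp.one_lt (by omega))] at this
    rw [this]
    exact (Nat.dvd_mod_iff (dvd_pow_self p (by omega))).mpr (Dvd.intro _ rfl)
  -- part 1
  have part1 : ∀ x : Fin 4 → ZMod (p ^ ν),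
      ((∑ i, x i ^ 2) = (((p:ℤ)^2 * m' : ℤ) : ZMod (p ^ ν)) ∧
        ∀ i, ((p : ZMod (p ^ ν)) ∣ x i)) →
        (∑ i, (((x i).val / p : ℕ) : ZMod (p ^ (ν - 2))) ^ 2) =
          (((p:ℤ)^2 * m' / (p:ℤ)^2 : ℤ) : ZMod (p ^ (ν - 2))) := by
    intro x ⟨hsum, hdvd⟩
    rw [hm']
    set a : Fin 4 → ℕ := fun i => (x i).val / p with ha
    have hpa : ∀ i, (x i).val = p * a i := fun i =>
      (Nat.mul_div_cancel' (keydvd _ (hdvd i)) ).symm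
    have h1 : ((∑ i, ((x i).val : ℤ) ^ 2 : ℤ) : ZMod (p ^ ν))
        = (((p:ℤ)^2 * m' : ℤ) : ZMod (p ^ ν)) := by
      push_cast [ZMod.natCast_val, ZMod.cast_id]
      exact_mod_cast hsum
    have h2 : ((p:ℤ) ^ ν) ∣ (p:ℤ)^2 * m' - ∑ i, ((x i).val : ℤ) ^ 2 := by
      have := ((ZMod.intCast_eq_intCast_iff _ _ _).mp h1).dvd
      exact_mod_cast this
    have h3 : ((p:ℤ) ^ (ν - 2)) ∣ m' - ∑ i, (a i : ℤ) ^ 2 := by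
      have h4 : (p:ℤ)^2 * (p:ℤ)^(ν-2) ∣ (p:ℤ)^2 * (m' - ∑ i, (a i : ℤ) ^ 2) := by
        have e3' : ((p:ℤ)) ^ ν = (p:ℤ) ^ 2 * (p:ℤ) ^ (ν - 2) := by exact_mod_cast congrArg (Nat.cast (R := ℤ)) e3
        rw [← e3']
        convert h2 using 1
        have : ∀ i, ((x i).val : ℤ) = p * a i := fun i => by exact_mod_cast congrArg (Nat.cast (R := ℤ)) (hpa i)
        simp only [this]
        rw [mul_sub, Finset.mul_sum]
        congr 1
        exact Finset.sum_congr rfl fun i _ => by ring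
      exact (mul_dvd_mul_iff_left (a := (p:ℤ)^2) (by positivity)).mp h4
    have h5 : ((∑ i, (a i : ℤ) ^ 2 : ℤ) : ZMod (p ^ (ν-2)))
        = ((m' : ℤ) : ZMod (p ^ (ν-2))) := by
      rw [ZMod.intCast_eq_intCast_iff]
      exact Int.modEq_iff_dvd.mpr (by exact_mod_cast h3)
    calc (∑ i, ((a i : ℕ) : ZMod (p ^ (ν - 2))) ^ 2)
        = ((∑ i, (a i : ℤ) ^ 2 : ℤ) : ZMod (p ^ (ν-2))) := by push_cast; ring
      _ = ((m' : ℤ) : ZMod (p ^ (ν-2))) := h5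
  refine ⟨part1, ?_⟩
  intro y hy
  rw [hm'] at hy
  -- congruence from hy
  have hy' : ((p:ℤ) ^ (ν - 2)) ∣ m' - ∑ i, ((y i).val : ℤ) ^ 2 := by
    have h1 : ((∑ i, ((y i).val : ℤ) ^ 2 : ℤ) : ZMod (p ^ (ν-2)))
        = ((m' : ℤ) : ZMod (p ^ (ν-2))) := by
      push_cast [ZMod.natCast_val, ZMod.cast_id]
      exact_mod_cast hy
    have := ((ZMod.intCast_eq_intCast_iff _ _ _).mp h1).dvd
    exact_mod_cast this
  -- the bijection
  set A : Fin 4 → ZMod p → ℕ := fun i t => (y i).val + p ^ (ν - 2) * t.val with hA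
  have hAlt : ∀ i t, A i t < p ^ (ν - 1) := by
    intro i t
    have h1 : (y i).val < p ^ (ν - 2) := ZMod.val_lt _
    have h2 : t.val < p := ZMod.val_lt t
    calc A i t < p ^ (ν - 2) * (t.val + 1) := by simp only [hA]; nlinarith
      _ ≤ p ^ (ν - 2) * p := by exact Nat.mul_le_mul_left _ h2
      _ = p ^ (ν - 1) := by rw [e1]; ring
  have hNlt : ∀ i t, p * A i t < p ^ ν := by
    intro i t
    rw [e2]
    exact (Nat.mul_lt_mul_left hppos).mpr (hAlt i t)
  set g : (Fin 4 → ZMod p) → (Fin 4 → ZMod (p ^ ν)) :=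
    fun t i => ((p * A i (t i) : ℕ) : ZMod (p ^ ν)) with hg
  have hval : ∀ t i, ((g t i).val) = p * A i (t i) := by
    intro t i
    exact ZMod.val_cast_of_lt (hNlt i (t i))
  have hmem : ∀ t : Fin 4 → ZMod p,
      ((∑ i, g t i ^ 2) = (((p:ℤ)^2*m' : ℤ) : ZMod (p ^ ν)) ∧
        ∀ i, ((p : ZMod (p ^ ν)) ∣ g t i)) ∧
      ∀ i, (((g t i).val / p : ℕ) : ZMod (p ^ (ν - 2))) = y i := by
    intro t
    have hdiv : ∀ i, (g t i).val / p = A i (t i) := by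
      intro i; rw [hval]; exact Nat.mul_div_cancel_left _ hppos
    refine ⟨⟨?_, ?_⟩, ?_⟩
    · -- sum condition
      have hterm : ∀ i, ((p:ℤ) ^ (ν - 2)) ∣ (A i (t i) : ℤ) ^ 2 - ((y i).val : ℤ) ^ 2 := by
        intro i
        have hd : ((p:ℤ) ^ (ν - 2)) ∣ (A i (t i) : ℤ) - ((y i).val : ℤ) :=
          ⟨(t i).val, by simp only [hA]; push_cast; ring⟩
        calc ((p:ℤ) ^ (ν - 2)) ∣ ((A i (t i) : ℤ) - ((y i).val : ℤ)) * ((A i (t i) : ℤ) + ((y i).val : ℤ)) := hd.mul_right _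
          _ = (A i (t i) : ℤ) ^ 2 - ((y i).val : ℤ) ^ 2 := by ring
      have hsumd : ((p:ℤ) ^ (ν - 2)) ∣ (∑ i, (A i (t i) : ℤ) ^ 2) - ∑ i, ((y i).val : ℤ) ^ 2 := by
        rw [← Finset.sum_sub_distrib]
        exact Finset.dvd_sum (fun i _ => hterm i)
      have h3 : ((p:ℤ) ^ (ν - 2)) ∣ m' - ∑ i, (A i (t i) : ℤ) ^ 2 := by
        have := dvd_sub hy' hsumd
        rw [sub_sub_sub_cancel_right] at this; exact this
      have h4 : ((p:ℤ) ^ ν) ∣ (p:ℤ)^2*m' - ∑ i, ((p:ℤ) * (A i (t i) : ℤ)) ^ 2 := by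
        have e3' : ((p:ℤ)) ^ ν = (p:ℤ) ^ 2 * (p:ℤ) ^ (ν - 2) := by exact_mod_cast congrArg (Nat.cast (R := ℤ)) e3
        rw [e3']
        have hh := mul_dvd_mul_left ((p:ℤ)^2) h3
        have heq : (p:ℤ)^2*m' - ∑ i, ((p:ℤ)*(A i (t i):ℤ))^2
            = (p:ℤ)^2*(m' - ∑ i, (A i (t i):ℤ)^2) := by
          rw [mul_sub, Finset.mul_sum]
          congr 1
          exact Finset.sum_congr rfl fun i _ => by ring
        rw [heq]
        exact hh
      have h5 : ((∑ i, ((p:ℤ) * (A i (t i) : ℤ)) ^ 2 : ℤ) : ZMod (p ^ ν))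
          = (((p:ℤ)^2*m' : ℤ) : ZMod (p ^ ν)) := by
        rw [ZMod.intCast_eq_intCast_iff]
        exact Int.modEq_iff_dvd.mpr (by exact_mod_cast h4)
      calc (∑ i, g t i ^ 2) = ((∑ i, ((p:ℤ) * (A i (t i) : ℤ)) ^ 2 : ℤ) : ZMod (p ^ ν)) := by
            simp only [hg]; push_cast; ring
        _ = (((p:ℤ)^2*m' : ℤ) : ZMod (p ^ ν)) := h5
    · -- divisibility
      intro i
      refine ⟨((A i (t i) : ℕ) : ZMod (p ^ ν)), ?_⟩
      simp only [hg]; push_cast; ring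
    · -- fiber condition
      intro i
      rw [hdiv]
      simp only [hA]
      rw [Nat.cast_add, Nat.cast_mul, ZMod.natCast_self, zero_mul, add_zero,
        ZMod.natCast_val, ZMod.cast_id]
  have hinj : Function.Injective g := by
    intro t t' h
    funext i
    have := congrFun h i
    have hv : p * A i (t i) = p * A i (t' i) := by
      rw [← hval t i, ← hval t' i, this]
    have : (t i).val = (t' i).val := by
      simp only [hA] at hv
      have hpow : 0 < p ^ (ν - 2) := pow_pos hppos _
      have h1 := Nat.eq_of_mul_eq_mul_left hppos hv
      have h2 := Nat.add_left_cancel h1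
      exact Nat.eq_of_mul_eq_mul_left hpow h2
    exact ZMod.val_injective p this
  -- main card computation
  have hbij : Function.Bijective (fun t : Fin 4 → ZMod p =>
      (⟨g t, hmem t⟩ : {x : Fin 4 → ZMod (p ^ ν) //
        ((∑ i, x i ^ 2) = (((p:ℤ)^2*m' : ℤ) : ZMod (p ^ ν)) ∧
          ∀ i, ((p : ZMod (p ^ ν)) ∣ x i)) ∧
        ∀ i, (((x i).val / p : ℕ) : ZMod (p ^ (ν - 2))) = y i})) := by
    constructor
    · intro t t' h
      exact hinj (congrArg Subtype.val h)
    · rintro ⟨x, ⟨hsum, hdvd⟩, hfib⟩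
      set a : Fin 4 → ℕ := fun i => (x i).val / p with ha
      have hpa : ∀ i, (x i).val = p * a i := fun i =>
        (Nat.mul_div_cancel' (keydvd _ (hdvd i))).symm
      have halt : ∀ i, a i < p ^ (ν - 1) := by
        intro i
        have := ZMod.val_lt (x i)
        rw [hpa i, e2] at this
        exact lt_of_mul_lt_mul_left this (Nat.zero_le p)
      have hmod : ∀ i, a i % p ^ (ν - 2) = (y i).val := by
        intro i
        have := hfib i
        rw [← ZMod.val_natCast (n := p ^ (ν - 2)) (a i)]
        rw [this]
      have hdivlt : ∀ i, a i / p ^ (ν - 2) < p := by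
        intro i
        apply Nat.div_lt_of_lt_mul
        rw [mul_comm, ← e1]; exact halt i
      refine ⟨fun i => ((a i / p ^ (ν - 2) : ℕ) : ZMod p), ?_⟩
      apply Subtype.ext
      funext i
      simp only [hg]
      have hvt : ((((a i / p ^ (ν - 2) : ℕ) : ZMod p)).val) = a i / p ^ (ν - 2) :=
        ZMod.val_cast_of_lt (hdivlt i)
      have : p * A i (((a i / p ^ (ν - 2) : ℕ) : ZMod p)) = (x i).val := by
        simp only [hA, hvt]
        rw [← hmod i, hpa i]
        congr 1
        rw [Nat.mod_add_div]
      rw [this, ZMod.natCast_val, ZMod.cast_id]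
  rw [← Nat.card_eq_of_bijective _ hbij]
  simp [Nat.card_eq_fintype_card, Fintype.card_fun, ZMod.card]
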